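/- arXiv:1905.03000 — 2 statements merged into one kernel-verified Lean document; each statement's English description precedes it below -/
import Mathlib

section
/- For all t ∈ [0, 2π] with t ≠ π, |(t−π)² · e^{it} / (1+e^{it})²| ≤ π²/4. -/
open Real Complex

theorem stmt_6 : ∀ t ∈ Set.Icc (0 : ℝ) (2 * π), t ≠ π →
    ‖(((t : ℂ) - (π : ℝ)) ^ 2 * Complex.exp (Complex.I * t)
        / (1 + Complex.exp (Complex.I * t)) ^ 2)‖ ≤ π ^ 2 / 4 := by
  intro t ht hne
  obtain ⟨ht0, ht2⟩ := ht
  have hpi := Real.pi_pos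
  -- factorization
  have hfac : (1 : ℂ) + Complex.exp (Complex.I * t)
      = 2 * Complex.cos (t / 2) * Complex.exp (Complex.I * (t / 2)) := by
    have h1 : Complex.exp (Complex.I * t)
        = Complex.exp (Complex.I * (t/2)) * Complex.exp (Complex.I * (t/2)) := by
      rw [← Complex.exp_add]; ring_nf
    rw [Complex.cos, h1,
      show ((t : ℂ)/2) * Complex.I = Complex.I * (t/2) by ring,
      show (-((t : ℂ)/2)) * Complex.I = -(Complex.I * (t/2)) by ring,
      Complex.exp_neg]
    have h := Complex.exp_ne_zero (Complex.I * ((t : ℂ)/2))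
    field_simp
    ring
  have habs1 : ‖1 + Complex.exp (Complex.I * t)‖ = 2 * |Real.cos (t / 2)| := by
    rw [hfac, norm_mul, norm_mul]
    have : Complex.cos ((t : ℂ) / 2) = ((Real.cos (t / 2) : ℝ) : ℂ) := by
      push_cast [Complex.ofReal_cos]; rfl
    rw [this, Complex.norm_real, Real.norm_eq_abs,
      show Complex.I * ((t : ℂ)/2) = ((t/2 : ℝ) : ℂ) * Complex.I by push_cast; ring,
      Complex.norm_exp_ofReal_mul_I]
    simp
  -- lower bound on |cos(t/2)|
  have hcos : |π - t| / π ≤ |Real.cos (t / 2)| := by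
    have hx : |(π - t) / 2| ≤ π / 2 := by
      rw [abs_le]; constructor <;> [linarith; linarith]
    have := Real.mul_abs_le_abs_sin hx
    have hsc : Real.sin ((π - t) / 2) = Real.cos (t / 2) := by
      rw [show (π - t)/2 = π/2 - t/2 by ring, Real.sin_pi_div_two_sub]
    rw [hsc] at this
    calc |π - t| / π = 2 / π * |(π - t) / 2| := by
          rw [abs_div, _root_.abs_two]; field_simp
      _ ≤ |Real.cos (t / 2)| := this
  have habs0 : (0 : ℝ) < |π - t| := abs_pos.2 (by intro h; exact hne (by linarith))
  have hcpos : (0 : ℝ) < |Real.cos (t / 2)| :=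
    lt_of_lt_of_le (by positivity) hcos
  rw [norm_div, norm_mul, norm_pow, norm_pow, habs1]
  have habsexp : ‖Complex.exp (Complex.I * t)‖ = 1 := by
    rw [show Complex.I * (t : ℂ) = ((t : ℝ) : ℂ) * Complex.I by ring,
      Complex.norm_exp_ofReal_mul_I]
  have habsnum : ‖(t : ℂ) - (π : ℝ)‖ = |π - t| := by
    rw [show (t : ℂ) - (π : ℝ) = ((t - π : ℝ) : ℂ) by push_cast; ring,
      Complex.norm_real, Real.norm_eq_abs, abs_sub_comm]
  rw [habsexp, habsnum, mul_one]
  rw [div_le_div_iff₀ (by positivity) (by norm_num)]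
  have hA : |π - t| ≤ |Real.cos (t/2)| * π := (div_le_iff₀ hpi).1 hcos
  nlinarith [mul_le_mul hA hA (abs_nonneg _) (by positivity : (0:ℝ) ≤ |Real.cos (t/2)| * π)]
end

section
/- For every odd natural number k, the Riemann zeta value at −k satisfies ζ(−k) = (1/i^{k−1}) · (1/(1 − 2^{k+1})) · (d/dz)^{k−1} [e^{iz}/(1+e^{iz})²] evaluated at z = 0. -/
open PowerSeries Finset Nat Complex

noncomputable section



noncomputable def Sq : PowerSeries ℚ := bernoulliPowerSeries ℚ - rescale 2 (bernoulliPowerSeries ℚ)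

lemma Sq_mul : Sq * (PowerSeries.exp ℚ + 1) = PowerSeries.X := by
  have h1 := bernoulliPowerSeries_mul_exp_sub_one ℚ
  have h2 : rescale (2:ℚ) (bernoulliPowerSeries ℚ) * (PowerSeries.exp ℚ ^ 2 - 1)
      = PowerSeries.C (2:ℚ) * PowerSeries.X := by
    have := congrArg (rescale (2:ℚ)) h1
    rw [map_mul, map_sub, map_one, rescale_X] at this
    rw [exp_pow_eq_rescale_exp]
    have h2' : ((2:ℕ):ℚ) = (2:ℚ) := by norm_num
    rw [h2']
    exact this
  have hne : PowerSeries.exp ℚ - 1 ≠ 0 := by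
    intro h
    have := congrArg (PowerSeries.coeff (R := ℚ) 1) h
    simp [PowerSeries.coeff_exp] at this
  apply mul_right_cancel₀ hne
  have : Sq * (PowerSeries.exp ℚ + 1) * (PowerSeries.exp ℚ - 1)
      = (bernoulliPowerSeries ℚ * (PowerSeries.exp ℚ - 1)) * (PowerSeries.exp ℚ + 1)
        - rescale (2:ℚ) (bernoulliPowerSeries ℚ) * (PowerSeries.exp ℚ ^ 2 - 1) := by
    rw [Sq]; ring
  rw [this, h1, h2]
  have : PowerSeries.C (2:ℚ) = (2 : PowerSeries ℚ) := by simp [map_ofNat]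
  rw [this]
  ring

noncomputable def qq (n : ℕ) : ℚ := bernoulli n * (1 - 2^n) / n !

lemma coeff_Sq (n : ℕ) : PowerSeries.coeff n Sq = qq n := by
  simp only [Sq, map_sub, coeff_rescale, bernoulliPowerSeries, coeff_mk, qq,
    Algebra.algebraMap_self, RingHom.id_apply]
  ring

lemma qq_zero : qq 0 = 0 := by simp [qq]

lemma qq_one : qq 1 = 1/2 := by norm_num [qq, bernoulli_one]

lemma qq_rec (n : ℕ) (hn : 1 ≤ n) :
    2 * (n ! : ℚ) * qq (n+1) + ∑ m ∈ range n, (n.choose m : ℚ) * m ! * qq (m+1) = 0 := by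
  have h := congrArg (PowerSeries.coeff (R := ℚ) (n+1)) Sq_mul
  rw [PowerSeries.coeff_mul, Nat.sum_antidiagonal_eq_sum_range_succ_mk,
    PowerSeries.coeff_X, if_neg (by omega)] at h
  simp only [map_add, PowerSeries.coeff_exp, PowerSeries.coeff_one, coeff_Sq,
    Algebra.algebraMap_self, RingHom.id_apply] at h
  -- h : ∑ i in range (n+2), qq i * (1/(n+1-i)! + ite (n+1-i=0) 1 0) = 0
  rw [Finset.sum_range_succ] at h
  have e1 : ∀ i ∈ range (n+1), qq i * (1 / ((n+1-i)! : ℚ) + if n+1-i = 0 then 1 else 0)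
      = qq i * (1 / ((n+1-i)! : ℚ)) := by
    intro i hi
    rw [if_neg (by simp at hi; omega), add_zero]
  rw [Finset.sum_congr rfl e1, Finset.sum_range_succ'] at h
  simp only [Nat.sub_self, Nat.factorial_zero, qq_zero, zero_mul, add_zero] at h
  have h' : ∑ m ∈ range n, qq (m+1) * (1 / ((n-m)! : ℚ)) + 2 * qq (n+1) = 0 := by
    rw [← h]
    congr 1
    · apply Finset.sum_congr rfl
      intro m _
      have e2 : n + 1 - (m+1) = n - m := by omega
      rw [e2]
    · norm_num
      ring
  calc 2 * (n ! : ℚ) * qq (n+1) + ∑ m ∈ range n, (n.choose m : ℚ) * m ! * qq (m+1)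
      = (n ! : ℚ) * (∑ m ∈ range n, qq (m+1) * (1 / ((n-m)! : ℚ)) + 2 * qq (n+1)) := by
        rw [mul_add, Finset.mul_sum, add_comm (2 * (n ! : ℚ) * qq (n+1)) _]
        congr 1
        · apply Finset.sum_congr rfl
          intro m hm
          have hm' : m ≤ n := le_of_lt (Finset.mem_range.mp hm)
          have hfac : ((n-m)! : ℚ) ≠ 0 := Nat.cast_ne_zero.mpr (Nat.factorial_ne_zero _)
          have hc : ((n.choose m : ℕ) : ℚ) * (m ! : ℚ) * ((n-m)! : ℚ) = (n ! : ℚ) := by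
            exact_mod_cast congrArg (Nat.cast : ℕ → ℚ) (Nat.choose_mul_factorial_mul_factorial hm')
          field_simp
          linear_combination qq (m+1) * hc
        · ring
    _ = (n ! : ℚ) * 0 := by rw [h']
    _ = 0 := by ring



lemma analyticOnNhd_iteratedDeriv {U : Set ℂ} (hU : IsOpen U) {f : ℂ → ℂ}
    (hf : AnalyticOnNhd ℂ f U) (n : ℕ) : AnalyticOnNhd ℂ (iteratedDeriv n f) U := by
  induction n with
  | zero => simpa [iteratedDeriv_zero] using hf
  | succ n ih =>
    rw [iteratedDeriv_succ]
    exact ih.deriv_of_isOpen hU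

lemma leibniz_iteratedDeriv {U : Set ℂ} (hU : IsOpen U) {f g : ℂ → ℂ}
    (hf : AnalyticOnNhd ℂ f U) (hg : AnalyticOnNhd ℂ g U) (n : ℕ) :
    Set.EqOn (iteratedDeriv n (fun w => f w * g w))
      (fun x => ∑ i ∈ range (n+1),
        (n.choose i : ℂ) * (iteratedDeriv i f x * iteratedDeriv (n-i) g x)) U := by
  induction n with
  | zero => intro x hx; simp
  | succ n ih =>
    intro x hx
    have hx' : U ∈ nhds x := hU.mem_nhds hx
    have hdf : ∀ m, DifferentiableAt ℂ (iteratedDeriv m f) x :=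
      fun m => (analyticOnNhd_iteratedDeriv hU hf m x hx).differentiableAt
    have hdg : ∀ m, DifferentiableAt ℂ (iteratedDeriv m g) x :=
      fun m => (analyticOnNhd_iteratedDeriv hU hg m x hx).differentiableAt
    rw [iteratedDeriv_succ,
      Filter.EventuallyEq.deriv_eq (Filter.eventuallyEq_of_mem hx' ih)]
    rw [deriv_fun_sum (fun i _ => (((hdf i).fun_mul (hdg (n-i))).const_mul _))]
    have step : ∀ i ∈ range (n+1),
        deriv (fun y => (n.choose i : ℂ) * (iteratedDeriv i f y * iteratedDeriv (n-i) g y)) x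
        = (n.choose i : ℂ) * (iteratedDeriv (i+1) f x * iteratedDeriv (n-i) g x
            + iteratedDeriv i f x * iteratedDeriv (n+1-i) g x) := by
      intro i hi
      have hi' : i ≤ n := by simpa using Nat.lt_succ_iff.mp (mem_range.mp hi)
      rw [deriv_const_mul _ ((hdf i).fun_mul (hdg (n-i))), deriv_fun_mul (hdf i) (hdg (n-i)),
        ← iteratedDeriv_succ, ← iteratedDeriv_succ]
      have : n - i + 1 = n + 1 - i := by omega
      rw [this]
    rw [Finset.sum_congr rfl step]
    show _ = ∑ i ∈ range (n + 2), ((n+1).choose i : ℂ)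
        * (iteratedDeriv i f x * iteratedDeriv (n+1-i) g x)
    rw [Finset.sum_choose_succ_mul
      (fun i j => iteratedDeriv i f x * iteratedDeriv j g x) n]
    have e1 : ∀ i ∈ range (n+1),
        (n.choose i : ℂ) * (iteratedDeriv (i+1) f x * iteratedDeriv (n-i) g x
          + iteratedDeriv i f x * iteratedDeriv (n+1-i) g x)
        = (n.choose i : ℂ) * (iteratedDeriv (i+1) f x * iteratedDeriv (n-i) g x)
          + (n.choose i : ℂ) * (iteratedDeriv i f x * iteratedDeriv (n+1-i) g x) := by
      intro i _; ring
    rw [Finset.sum_congr rfl e1, Finset.sum_add_distrib, add_comm]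



def Uc : Set ℂ := {w | 1 + Complex.exp w ≠ 0}

lemma hUc_open : IsOpen Uc := by
  have : Uc = (fun w => 1 + Complex.exp w) ⁻¹' {(0:ℂ)}ᶜ := rfl
  rw [this]
  exact (continuous_const.add Complex.continuous_exp).isOpen_preimage _ isOpen_compl_singleton

lemma zero_mem_Uc : (0:ℂ) ∈ Uc := by
  simp only [Uc, Set.mem_setOf_eq, Complex.exp_zero]
  norm_num

def Gc : ℂ → ℂ := fun w => (1 + Complex.exp w)⁻¹

lemma hGc : AnalyticOnNhd ℂ Gc Uc :=
  fun w hw => ((analyticAt_const.add analyticAt_cexp).inv hw)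

lemma hEc : AnalyticOnNhd ℂ (fun w => 1 + Complex.exp w) Uc :=
  fun _ _ => analyticAt_const.add analyticAt_cexp

lemma iteratedDeriv_cexp (n : ℕ) : iteratedDeriv n Complex.exp = Complex.exp := by
  induction n with
  | zero => simp [iteratedDeriv_zero]
  | succ n ih => rw [iteratedDeriv_succ, ih, Complex.deriv_exp]

lemma E_val (j : ℕ) (hj : 1 ≤ j) : iteratedDeriv j (fun w => 1 + Complex.exp w) 0 = 1 := by
  obtain ⟨m, rfl⟩ : ∃ m, j = m + 1 := ⟨j - 1, by omega⟩
  rw [iteratedDeriv_succ']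
  have : deriv (fun w => 1 + Complex.exp w) = Complex.exp := by
    funext w
    rw [deriv_const_add]
    exact congrFun Complex.deriv_exp w
  rw [this, iteratedDeriv_cexp, Complex.exp_zero]

lemma iteratedDeriv_one_fun (n : ℕ) (hn : 1 ≤ n) :
    iteratedDeriv n (fun _ : ℂ => (1:ℂ)) 0 = 0 := by
  have hz : ∀ m, iteratedDeriv m (fun _ : ℂ => (0:ℂ)) = fun _ => 0 := by
    intro m
    induction m with
    | zero => simp [iteratedDeriv_zero]
    | succ m ih => rw [iteratedDeriv_succ, ih]; funext x; simp
  obtain ⟨m, rfl⟩ : ∃ m, n = m + 1 := ⟨n - 1, by omega⟩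
  rw [iteratedDeriv_succ', deriv_const']
  rw [hz]

lemma D_rec (n : ℕ) (hn : 1 ≤ n) :
    2 * iteratedDeriv n Gc 0
      + ∑ i ∈ range n, (n.choose i : ℂ) * iteratedDeriv i Gc 0 = 0 := by
  have h1 := leibniz_iteratedDeriv hUc_open hGc hEc n zero_mem_Uc
  have h2 : Set.EqOn (fun w => Gc w * (1 + Complex.exp w)) (fun _ => (1:ℂ)) Uc :=
    fun w hw => inv_mul_cancel₀ hw
  rw [h2.iteratedDeriv_of_isOpen hUc_open n zero_mem_Uc, iteratedDeriv_one_fun n hn] at h1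
  dsimp only at h1
  rw [Finset.sum_range_succ] at h1
  simp only [Nat.choose_self, Nat.cast_one, Nat.sub_self, one_mul] at h1
  rw [iteratedDeriv_zero] at h1
  have h3 : ∀ i ∈ range n, (n.choose i : ℂ) * (iteratedDeriv i Gc 0
      * iteratedDeriv (n-i) (fun w => 1 + Complex.exp w) 0)
      = (n.choose i : ℂ) * iteratedDeriv i Gc 0 := by
    intro i hi
    rw [E_val (n-i) (by simp at hi; omega), mul_one]
  rw [Finset.sum_congr rfl h3] at h1
  rw [Complex.exp_zero] at h1
  linear_combination -h1

lemma D_val (n : ℕ) : iteratedDeriv n Gc 0 = ((n ! : ℚ) * qq (n+1) : ℚ) := by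
  induction n using Nat.strong_induction_on with
  | _ n ih =>
    match n, ih with
    | 0, _ =>
      rw [iteratedDeriv_zero]
      have : Gc 0 = 2⁻¹ := by
        simp only [Gc, Complex.exp_zero]
        norm_num
      rw [this, qq_one]
      push_cast
      norm_num
    | (m+1), ih =>
      have hrec := D_rec (m+1) (by omega)
      have hsum : ∑ i ∈ range (m+1), ((m+1).choose i : ℂ) * iteratedDeriv i Gc 0
          = ∑ i ∈ range (m+1), ((m+1).choose i : ℂ) * (i ! : ℂ) * ((qq (i+1) : ℚ) : ℂ) := by
        apply Finset.sum_congr rfl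
        intro i hi
        rw [ih i (Finset.mem_range.mp hi)]
        push_cast
        ring
      rw [hsum] at hrec
      have hQ := congrArg (fun t : ℚ => (t : ℂ)) (qq_rec (m+1) (by omega))
      push_cast at hQ ⊢
      linear_combination (hrec - hQ) / 2

def gc : ℂ → ℂ := fun w => Complex.exp w / (1 + Complex.exp w)^2

lemma hgc : AnalyticOnNhd ℂ gc Uc := fun w hw =>
  analyticAt_cexp.div ((analyticAt_const.add analyticAt_cexp).pow 2) (pow_ne_zero 2 hw)

lemma gc_eq : Set.EqOn gc (fun w => -deriv Gc w) Uc := by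
  intro w hw
  have h1 : HasDerivAt (fun w => 1 + Complex.exp w) (Complex.exp w) w :=
    (Complex.hasDerivAt_exp w).const_add 1
  have hd : HasDerivAt Gc (-(Complex.exp w) / (1 + Complex.exp w)^2) w := h1.inv hw
  show gc w = -deriv Gc w
  rw [hd.deriv]
  simp only [gc]
  ring

lemma iteratedDeriv_gc (m : ℕ) :
    iteratedDeriv m gc 0 = -iteratedDeriv (m+1) Gc 0 := by
  rw [gc_eq.iteratedDeriv_of_isOpen hUc_open m zero_mem_Uc]
  rw [iteratedDeriv_fun_neg, ← iteratedDeriv_succ']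

lemma comp_I_iteratedDeriv {U : Set ℂ} (hU : IsOpen U) :
    ∀ (n : ℕ) (h : ℂ → ℂ), AnalyticOnNhd ℂ h U → ∀ (c : ℂ) (x : ℝ), (Complex.I * x) ∈ U →
      iteratedDeriv n (fun z : ℝ => c * h (Complex.I * z)) x
        = c * Complex.I ^ n * iteratedDeriv n h (Complex.I * x) := by
  intro n
  induction n with
  | zero => intro h _ c x _; simp [iteratedDeriv_zero]
  | succ n ih =>
    intro h hh c x hx
    have hVopen : IsOpen ((fun x : ℝ => Complex.I * (x:ℂ)) ⁻¹' U) :=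
      (Continuous.isOpen_preimage (by continuity) U hU)
    have hEq : Set.EqOn (deriv (fun z : ℝ => c * h (Complex.I * z)))
        (fun z : ℝ => (c * Complex.I) * deriv h (Complex.I * z))
        ((fun x : ℝ => Complex.I * (x:ℂ)) ⁻¹' U) := by
      intro y hy
      have hdh : HasDerivAt h (deriv h (Complex.I * y)) (Complex.I * y) :=
        ((hh _ hy).differentiableAt).hasDerivAt
      have hin : HasDerivAt (fun z : ℝ => Complex.I * (z:ℂ)) Complex.I y := by
        simpa using (Complex.ofRealCLM.hasDerivAt (x := y)).const_mul Complex.I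
      have hcomp := (hdh.scomp y hin).const_mul c
      have hde : deriv (fun z : ℝ => c * h (Complex.I * z)) y
          = c * (Complex.I • deriv h (Complex.I * y)) := HasDerivAt.deriv hcomp
      rw [hde]
      simp only [smul_eq_mul]
      ring
    rw [iteratedDeriv_succ', hEq.iteratedDeriv_of_isOpen hVopen n hx,
      ih (deriv h) (hh.deriv_of_isOpen hU) (c * Complex.I) x hx, iteratedDeriv_succ']
    ring


theorem stmt_15 (k : ℕ) (hk : Odd k) :
    riemannZeta (-(k : ℂ)) =
      (1 / Complex.I ^ (k - 1)) * (1 / (1 - 2 ^ (k + 1))) *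
        iteratedDeriv (k - 1) (fun z : ℝ => Complex.exp (Complex.I * z)
          / (1 + Complex.exp (Complex.I * z)) ^ 2) 0 := by
  have hfun : (fun z : ℝ => Complex.exp (Complex.I * z)
      / (1 + Complex.exp (Complex.I * z)) ^ 2) = fun z : ℝ => 1 * gc (Complex.I * z) := by
    funext z
    simp [gc]
  have hmem : (Complex.I * ((0:ℝ):ℂ)) ∈ Uc := by
    simpa using zero_mem_Uc
  rw [hfun, comp_I_iteratedDeriv hUc_open (k-1) gc hgc 1 0 hmem]
  rw [show (Complex.I * ((0:ℝ):ℂ)) = 0 by simp, iteratedDeriv_gc]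
  obtain ⟨m, rfl⟩ := hk
  have hsub : 2 * m + 1 - 1 + 1 = 2 * m + 1 := by omega
  rw [hsub, D_val]
  rw [riemannZeta_neg_nat_eq_bernoulli]
  have hIne : Complex.I ^ (2*m+1-1) ≠ 0 := pow_ne_zero _ Complex.I_ne_zero
  have h2ne : (1:ℂ) - 2 ^ (2*m+1+1) ≠ 0 := by
    have h22 : ((2:ℂ)) ^ (2*m+1+1) = ((2^(2*m+1+1) : ℕ) : ℂ) := by push_cast; ring_nf
    rw [h22]
    intro hcon
    rw [sub_eq_zero] at hcon
    have h1 : (2^(2*m+1+1) : ℕ) = 1 := by exact_mod_cast hcon.symm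
    have hge : 4 ≤ 2^(2*m+1+1) := by
      calc 4 = 2^2 := rfl
      _ ≤ 2^(2*m+1+1) := Nat.pow_le_pow_right (by norm_num) (by omega)
    omega
  have hNe1 : ((2*m+1:ℕ):ℂ) + 1 ≠ 0 := by
    have : ((2*m+1:ℕ):ℂ) + 1 = ((2*m+2:ℕ):ℂ) := by push_cast; ring
    rw [this]
    exact Nat.cast_ne_zero.mpr (by omega)
  have hfactQ : ((2*m+1+1)! : ℚ) = (2*m+1+1 : ℕ) * ((2*m+1)! : ℚ) := by
    rw [Nat.factorial_succ]
    push_cast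
    ring
  have hQ : (((2*m+1)! : ℚ) * qq (2*m+1+1) : ℚ)
      = bernoulli (2*m+1+1) * (1 - 2^(2*m+1+1)) / ((2*m+1+1 : ℕ) : ℚ) := by
    rw [qq, hfactQ]
    have hf1 : (((2*m+1)! : ℕ) : ℚ) ≠ 0 := Nat.cast_ne_zero.mpr (Nat.factorial_ne_zero _)
    have hf2 : ((2*m+1+1 : ℕ) : ℚ) ≠ 0 := Nat.cast_ne_zero.mpr (by omega)
    field_simp
  have hQC : ((((2*m+1)! : ℚ) * qq (2*m+1+1) : ℚ) : ℂ)
      = (bernoulli (2*m+1+1) : ℂ) * (1 - 2^(2*m+1+1)) / ((((2*m+1:ℕ)):ℂ) + 1) := by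
    rw [hQ]
    push_cast
    ring
  rw [hQC, Odd.neg_one_pow ⟨m, by ring⟩]
  have key : ∀ (A C B D : ℂ), A ≠ 0 → C ≠ 0 →
      1/A * (1/C) * (1 * A * -(B * C / D)) = -1 * B / D := by
    intro A C B D hA hC
    calc 1/A * (1/C) * (1 * A * -(B * C / D)) = (A/A) * ((C/C) * (-1 * B/D)) := by ring
    _ = -1 * B / D := by rw [div_self hA, div_self hC]; ring
  rw [key _ _ _ _ hIne h2ne]

end
end
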